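/- Let k be a positive integer. If γ⁻¹(G) ≤ α(G) holds for every finite simple graph G without isolated vertices having γ(G) = k, then γ⁻¹(G) ≤ α(G) holds for every finite simple graph G without isolated vertices having γ(G) ≤ k. -/

import Mathlib

/-- `D` is a dominating set of `G`: every vertex lies in `D` or has a neighbor in `D`. -/
def IsDomSet {V : Type*} (G : SimpleGraph V) (D : Set V) : Prop :=
  ∀ v : V, v ∈ D ∨ ∃ u ∈ D, G.Adj u v

/-- `S` is an independent set of `G`. -/
def IsIndep {V : Type*} (G : SimpleGraph V) (S : Set V) : Prop :=
  S.Pairwise fun u v => ¬ G.Adj u v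

/-- The domination number of `G`: the minimum size of a dominating set. -/
noncomputable def gamma {V : Type*} (G : SimpleGraph V) : ℕ :=
  sInf {n | ∃ D : Set V, IsDomSet G D ∧ D.ncard = n}

/-- The independence number of `G`: the maximum size of an independent set. -/
noncomputable def alpha {V : Type*} (G : SimpleGraph V) : ℕ :=
  sSup {n | ∃ S : Set V, IsIndep G S ∧ S.ncard = n}

/-- The inverse domination number of `G`: the minimum size of a dominating set
disjoint from some minimum dominating set. -/
noncomputable def invGamma {V : Type*} (G : SimpleGraph V) : ℕ :=
  sInf {n | ∃ D T : Set V, IsDomSet G D ∧ D.ncard = gamma G ∧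
    IsDomSet G T ∧ D ∩ T = ∅ ∧ T.ncard = n}

/-- The independence number of the subgraph of `G` induced by `D`. -/
noncomputable def alphaOn {V : Type*} (G : SimpleGraph V) (D : Set V) : ℕ :=
  sSup {n | ∃ S : Set V, S ⊆ D ∧ IsIndep G S ∧ S.ncard = n}

/-- The number of edges of the subgraph of `G` induced by `D`. -/
noncomputable def edgeCountOn {V : Type*} (G : SimpleGraph V) (D : Set V) : ℕ :=
  {e ∈ G.edgeSet | ∀ v ∈ e, v ∈ D}.ncard

/-- `D` is an optimal dominating set: of minimum size; among those, `G[D]` has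
maximum independence number; and subject to that, `G[D]` has fewest edges. -/
def IsOptimalDomSet {V : Type*} (G : SimpleGraph V) (D : Set V) : Prop :=
  IsDomSet G D ∧ D.ncard = gamma G ∧
  (∀ D' : Set V, IsDomSet G D' → D'.ncard = gamma G → alphaOn G D' ≤ alphaOn G D) ∧
  (∀ D' : Set V, IsDomSet G D' → D'.ncard = gamma G →
    alphaOn G D' = alphaOn G D → edgeCountOn G D ≤ edgeCountOn G D')

/-- `w` is a private neighbor of `v` with respect to `D`: `w ∉ D` and `N(w) ∩ D = {v}`. -/
def IsPrivateNbr {V : Type*} (G : SimpleGraph V) (D : Set V) (v w : V) : Prop :=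
  w ∉ D ∧ G.Adj v w ∧ ∀ u ∈ D, G.Adj u w → u = v

/-- `R` is a partial independent set of representatives (partial ISR) for the family `P`:
an independent set consisting of distinct representatives of some subfamily of `P`. -/
def IsPartialISR {V : Type*} (G : SimpleGraph V) {n : ℕ} (P : Fin n → Set V)
    (R : Set V) : Prop :=
  IsIndep G R ∧ ∃ (J : Set (Fin n)) (x : Fin n → V),
    Set.InjOn x J ∧ (∀ j ∈ J, x j ∈ P j) ∧ R = x '' J

/-- `b(G)`: the largest number of vertices of an induced bipartite subgraph of `G`. -/
noncomputable def bipNum {V : Type*} (G : SimpleGraph V) : ℕ :=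
  sSup {n | ∃ B A : Set V, A ⊆ B ∧ IsIndep G A ∧ IsIndep G (B \ A) ∧ B.ncard = n}

section Aux
set_option linter.unusedSectionVars false

variable {V : Type*} [Fintype V] {G : SimpleGraph V}

lemma aux_gamma_le_card {D : Set V} (hD : IsDomSet G D) : gamma G ≤ D.ncard :=
  Nat.sInf_le ⟨D, hD, rfl⟩

lemma aux_exists_min_dom (G : SimpleGraph V) :
    ∃ D : Set V, IsDomSet G D ∧ D.ncard = gamma G := by
  have : gamma G ∈ {n | ∃ D : Set V, IsDomSet G D ∧ D.ncard = n} :=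
    Nat.sInf_mem ⟨(Set.univ : Set V).ncard, Set.univ, fun v => Or.inl trivial, rfl⟩
  exact this

lemma aux_ncard_le_alpha {S : Set V} (hS : IsIndep G S) : S.ncard ≤ alpha G := by
  refine le_csSup ⟨Fintype.card V, ?_⟩ ⟨S, hS, rfl⟩
  rintro n ⟨S, -, rfl⟩
  calc S.ncard ≤ (Set.univ : Set V).ncard := Set.ncard_le_ncard (Set.subset_univ S)
    _ = Fintype.card V := by simp [Set.ncard_univ]

lemma aux_invGamma_le {D T : Set V} (hD : IsDomSet G D) (hDc : D.ncard = gamma G)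
    (hT : IsDomSet G T) (hdisj : D ∩ T = ∅) : invGamma G ≤ T.ncard :=
  Nat.sInf_le ⟨D, T, hD, hDc, hT, hdisj, rfl⟩

lemma aux_compl_dom (hiso : ∀ v : V, ∃ u, G.Adj v u) {D : Set V}
    (hD : IsDomSet G D) (hDc : D.ncard = gamma G) : IsDomSet G Dᶜ := by
  intro v
  by_cases hv : v ∈ D
  · by_contra hcon
    push_neg at hcon
    obtain ⟨hv', hn⟩ := hcon
    have hall : ∀ u, G.Adj u v → u ∈ D := by
      intro u hu
      by_contra hu'
      exact hn u hu' hu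
    have hdom : IsDomSet G (D \ {v}) := by
      intro w
      rcases hD w with hw | ⟨u, hu, hadj⟩
      · by_cases hwv : w = v
        · subst hwv
          obtain ⟨u, hu⟩ := hiso w
          have huD : u ∈ D := hall u hu.symm
          exact Or.inr ⟨u, ⟨huD, fun e => G.irrefl (e ▸ hu)⟩, hu.symm⟩
        · exact Or.inl ⟨hw, hwv⟩
      · by_cases huv : u = v
        · subst huv
          have hwD : w ∈ D := hall w hadj.symm
          have hwv : w ≠ u := fun e => G.irrefl (e ▸ hadj)
          exact Or.inl ⟨hwD, hwv⟩
        · exact Or.inr ⟨u, ⟨hu, huv⟩, hadj⟩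
    have h1 : gamma G ≤ (D \ {v}).ncard := aux_gamma_le_card hdom
    have h2 : (D \ {v}).ncard < D.ncard :=
      Set.ncard_diff_singleton_lt_of_mem hv (Set.toFinite D)
    omega
  · exact Or.inl hv

lemma aux_exists_invGamma_witness (hiso : ∀ v : V, ∃ u, G.Adj v u) :
    ∃ D T : Set V, IsDomSet G D ∧ D.ncard = gamma G ∧
      IsDomSet G T ∧ D ∩ T = ∅ ∧ T.ncard = invGamma G := by
  obtain ⟨D, hD, hDc⟩ := aux_exists_min_dom G
  have : invGamma G ∈ {n | ∃ D T : Set V, IsDomSet G D ∧ D.ncard = gamma G ∧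
      IsDomSet G T ∧ D ∩ T = ∅ ∧ T.ncard = n} :=
    Nat.sInf_mem ⟨Dᶜ.ncard, D, Dᶜ, hD, hDc, aux_compl_dom hiso hD hDc,
      Set.inter_compl_self D, rfl⟩
  exact this

end Aux

lemma aux_ncard_sum {α β : Type*} [Fintype α] [Fintype β] (A : Set (α ⊕ β)) :
    A.ncard = (Sum.inl ⁻¹' A).ncard + (Sum.inr ⁻¹' A).ncard := by
  have hA : A = Sum.inl '' (Sum.inl ⁻¹' A) ∪ Sum.inr '' (Sum.inr ⁻¹' A) := by
    ext x; cases x <;> simp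
  have hdisj : Disjoint (Sum.inl '' (Sum.inl ⁻¹' A)) (Sum.inr '' (Sum.inr ⁻¹' A)) := by
    rw [Set.disjoint_left]
    rintro x ⟨a, -, rfl⟩ ⟨b, -, hb⟩
    cases hb
  nth_rewrite 1 [hA]
  rw [Set.ncard_union_eq hdisj (Set.toFinite _) (Set.toFinite _),
    Set.ncard_image_of_injective _ Sum.inl_injective,
    Set.ncard_image_of_injective _ Sum.inr_injective]

lemma aux_r_le {r : ℕ} (P : Set (Fin r × Bool))
    (hP : ∀ i : Fin r, (i, true) ∈ P ∨ (i, false) ∈ P) : r ≤ P.ncard := by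
  classical
  set f : Fin r → Fin r × Bool := fun i => (i, if (i, true) ∈ P then true else false) with hf
  have hmem : ∀ i, f i ∈ P := by
    intro i
    by_cases hi : (i, true) ∈ P
    · simpa [hf, hi] using hi
    · rcases hP i with h1 | h2
      · exact absurd h1 hi
      · simpa [hf, hi] using h2
  have hinj : Function.Injective f := fun i j e => congrArg Prod.fst e
  calc r = (Set.univ : Set (Fin r)).ncard := by simp [Set.ncard_univ]
    _ = (f '' Set.univ).ncard := (Set.ncard_image_of_injective _ hinj).symm
    _ ≤ P.ncard := Set.ncard_le_ncard (by rintro x ⟨i, -, rfl⟩; exact hmem i) (Set.toFinite P)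

def padGraph {V : Type} (G : SimpleGraph V) (r : ℕ) :
    SimpleGraph (V ⊕ (Fin r × Bool)) where
  Adj x y := match x, y with
    | Sum.inl u, Sum.inl v => G.Adj u v
    | Sum.inr a, Sum.inr b => a.1 = b.1 ∧ a.2 ≠ b.2
    | _, _ => False
  symm := by
    refine ⟨?_⟩; rintro (u | a) (v | b) h
    · exact h.symm
    · exact h.elim
    · exact h.elim
    · exact ⟨h.1.symm, h.2.symm⟩
  loopless := by
    refine ⟨?_⟩; rintro (u | a) h
    · exact G.irrefl h
    · exact h.2 rfl

theorem inverse_domination_downward_closed (k : ℕ) (hk : 0 < k)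
    (h : ∀ (W : Type) [Fintype W] (H : SimpleGraph W),
      (∀ v : W, ∃ u, H.Adj v u) → gamma H = k → invGamma H ≤ alpha H) :
    ∀ (V : Type) [Fintype V] (G : SimpleGraph V),
      (∀ v : V, ∃ u, G.Adj v u) → gamma G ≤ k → invGamma G ≤ alpha G := by
  intro V _ G hiso hle
  classical
  set m := gamma G with hm
  set r := k - m with hr
  have hmr : m + r = k := by omega
  set H := padGraph G r with hH
  -- no isolated vertices in H
  have hisoH : ∀ v : V ⊕ (Fin r × Bool), ∃ u, H.Adj v u := by
    rintro (v | ⟨i, b⟩)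
    · obtain ⟨u, hu⟩ := hiso v
      exact ⟨Sum.inl u, hu⟩
    · exact ⟨Sum.inr (i, !b), rfl, by simp⟩
  -- domination transfers
  have domL : ∀ D : Set (V ⊕ (Fin r × Bool)), IsDomSet H D →
      IsDomSet G (Sum.inl ⁻¹' D) := by
    intro D hD v
    rcases hD (Sum.inl v) with hv | ⟨u, hu, hadj⟩
    · exact Or.inl hv
    · cases u with
      | inl u => exact Or.inr ⟨u, hu, hadj⟩
      | inr a => exact hadj.elim
  have domR : ∀ D : Set (V ⊕ (Fin r × Bool)), IsDomSet H D → ∀ i : Fin r,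
      (i, true) ∈ Sum.inr ⁻¹' D ∨ (i, false) ∈ Sum.inr ⁻¹' D := by
    intro D hD i
    rcases hD (Sum.inr (i, true)) with hv | ⟨u, hu, hadj⟩
    · exact Or.inl hv
    · cases u with
      | inl u => exact hadj.elim
      | inr a =>
        obtain ⟨j, b⟩ := a
        obtain ⟨h1, h2⟩ := hadj
        simp only at h1 h2
        subst h1
        have : b = false := by simpa using h2
        subst this
        exact Or.inr hu
  -- gamma H = k
  have gammaH : gamma H = k := by
    refine le_antisymm ?_ ?_
    · obtain ⟨D₀, hD₀, hc₀⟩ := aux_exists_min_dom G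
      set D₁ : Set (V ⊕ (Fin r × Bool)) :=
        Sum.inl '' D₀ ∪ Sum.inr '' (Set.range fun i : Fin r => (i, true)) with hD₁def
      have hdom : IsDomSet H D₁ := by
        rintro (v | ⟨i, b⟩)
        · rcases hD₀ v with hv | ⟨u, hu, hadj⟩
          · exact Or.inl (Or.inl ⟨v, hv, rfl⟩)
          · exact Or.inr ⟨Sum.inl u, Or.inl ⟨u, hu, rfl⟩, hadj⟩
        · cases b with
          | true => exact Or.inl (Or.inr ⟨(i, true), ⟨i, rfl⟩, rfl⟩)
          | false => exact Or.inr ⟨Sum.inr (i, true), Or.inr ⟨(i, true), ⟨i, rfl⟩, rfl⟩,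
              rfl, by simp⟩
      have hdisj : Disjoint (Sum.inl '' D₀ : Set (V ⊕ (Fin r × Bool)))
          (Sum.inr '' (Set.range fun i : Fin r => (i, true))) := by
        rw [Set.disjoint_left]
        rintro x ⟨a, -, rfl⟩ ⟨b, -, hb⟩
        cases hb
      have hcard : D₁.ncard = m + r := by
        rw [hD₁def, Set.ncard_union_eq hdisj (Set.toFinite _) (Set.toFinite _),
          Set.ncard_image_of_injective _ Sum.inl_injective,
          Set.ncard_image_of_injective _ Sum.inr_injective, hc₀, ← hm]
        congr 1
        rw [← Set.image_univ, Set.ncard_image_of_injective _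
          (fun i j e => congrArg Prod.fst e)]
        simp [Set.ncard_univ]
      have := aux_gamma_le_card hdom
      omega
    · obtain ⟨D, hD, hDc⟩ := aux_exists_min_dom H
      have h1 : m ≤ (Sum.inl ⁻¹' D).ncard := aux_gamma_le_card (domL D hD)
      have h2 : r ≤ (Sum.inr ⁻¹' D).ncard := aux_r_le _ (domR D hD)
      have h3 := aux_ncard_sum D
      omega
  -- alpha H ≤ alpha G + r
  have alphaH : alpha H ≤ alpha G + r := by
    refine csSup_le' ?_
    rintro n ⟨S, hS, rfl⟩
    have h1 : (Sum.inl ⁻¹' S).ncard ≤ alpha G := by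
      refine aux_ncard_le_alpha (G := G) ?_
      intro u hu v hv huv
      exact hS hu hv (fun e => huv (Sum.inl.inj e))
    have h2 : (Sum.inr ⁻¹' S).ncard ≤ r := by
      have hinj : Set.InjOn Prod.fst (Sum.inr ⁻¹' S) := by
        intro a ha b hb hab
        by_contra hne
        have hadj : H.Adj (Sum.inr a) (Sum.inr b) :=
          ⟨hab, fun e => hne (Prod.ext hab e)⟩
        exact hS ha hb (fun e => hne (Sum.inr.inj e)) hadj
      calc (Sum.inr ⁻¹' S).ncard = (Prod.fst '' (Sum.inr ⁻¹' S)).ncard :=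
            (Set.ncard_image_of_injOn hinj).symm
        _ ≤ (Set.univ : Set (Fin r)).ncard :=
            Set.ncard_le_ncard (Set.subset_univ _) (Set.toFinite _)
        _ = r := by simp [Set.ncard_univ]
    have h3 := aux_ncard_sum S
    omega
  -- get optimal witness for H
  obtain ⟨D, T, hD, hDc, hT, hdisj, hTc⟩ := aux_exists_invGamma_witness hisoH
  have hinv : invGamma H ≤ alpha H := h _ H hisoH gammaH
  -- transfer back to G
  have hDl : IsDomSet G (Sum.inl ⁻¹' D) := domL D hD
  have hTl : IsDomSet G (Sum.inl ⁻¹' T) := domL T hT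
  have hDlc : (Sum.inl ⁻¹' D).ncard = m := by
    have h1 : m ≤ (Sum.inl ⁻¹' D).ncard := aux_gamma_le_card hDl
    have h2 : r ≤ (Sum.inr ⁻¹' D).ncard := aux_r_le _ (domR D hD)
    have h3 := aux_ncard_sum D
    rw [hDc, gammaH] at h3
    omega
  have hdisjl : (Sum.inl ⁻¹' D) ∩ (Sum.inl ⁻¹' T) = ∅ := by
    rw [← Set.preimage_inter, hdisj, Set.preimage_empty]
  have hfin : invGamma G ≤ (Sum.inl ⁻¹' T).ncard :=
    aux_invGamma_le hDl (hDlc.trans hm) hTl hdisjl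
  have h2 : r ≤ (Sum.inr ⁻¹' T).ncard := aux_r_le _ (domR T hT)
  have h3 := aux_ncard_sum T
  rw [hTc] at h3
  omega
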